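/- The squared difference of posterior means integrated over the domain of future predictions satisfies ∫_S ∫_{t₀}^{+∞} (μ_D(x,t) − μ_D̃(x,t))² dt dx ≤ λ²·a²·C₁₁ + 2λ²·a·Σ_{j=2}^{n} b_j·C_{1j} + λ²·Σ_{i=2}^{n} Σ_{j=2}^{n} b_i·b_j·C_{ij}, where a = E·y₁ + G·ỹ ∈ ℝ and b ∈ ℝ^{n−1} is defined by bᵀ = y₁·Hᵀ + ỹᵀ(F − Δ̃⁻¹). -/

import Mathlib

open Matrix MeasureTheory

/-- Lemma 3 of the paper: integrated bound on the squared difference of posterior means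
over the domain of future predictions. -/
theorem stmt_6
    (d n : ℕ) (hd : 1 ≤ d) (hn : 1 ≤ n)
    (lam sig : ℝ) (hlam : 0 < lam) (hsig : 0 < sig)
    (kS kT : ℝ → ℝ)
    (hkSmeas : Measurable kS) (hkTmeas : Measurable kT)
    (hkSrange : ∀ r, kS r ∈ Set.Icc (0 : ℝ) 1) (hkTrange : ∀ r, kT r ∈ Set.Icc (0 : ℝ) 1)
    (hkS0 : kS 0 = 1) (hkT0 : kT 0 = 1)
    (k : (EuclideanSpace ℝ (Fin d) × ℝ) → (EuclideanSpace ℝ (Fin d) × ℝ) → ℝ)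
    (hk : ∀ p q, k p q = lam * kS (‖p.1 - q.1‖) * kT (|p.2 - q.2|))
    (pts : Fin (n + 1) → EuclideanSpace ℝ (Fin d) × ℝ)
    (y : Fin (n + 1) → ℝ)
    (Δ : Matrix (Fin (n + 1)) (Fin (n + 1)) ℝ)
    (hΔ : ∀ i j, Δ i j = k (pts i) (pts j) + sig ^ 2 * (if i = j then 1 else 0))
    (hPD : Δ.PosDef)
    (Δt : Matrix (Fin n) (Fin n) ℝ)
    (hΔt : Δt = Δ.submatrix Fin.succ Fin.succ)
    (k1 : Fin n → ℝ)
    (hk1 : ∀ j : Fin n, k1 j = k (pts 0) (pts j.succ))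
    (E : ℝ) (hE : E = (lam + sig ^ 2 - k1 ⬝ᵥ Δt⁻¹ *ᵥ k1)⁻¹)
    (F : Matrix (Fin n) (Fin n) ℝ)
    (hF : F = (Δt - (lam + sig ^ 2)⁻¹ • vecMulVec k1 k1)⁻¹)
    (G : Fin n → ℝ) (hG : G = -(E • (k1 ᵥ* Δt⁻¹)))
    (H : Fin n → ℝ) (hH : H = -((lam + sig ^ 2)⁻¹ • (F *ᵥ k1)))
    (μD μDt : (EuclideanSpace ℝ (Fin d) × ℝ) → ℝ)
    (hμD : ∀ p, μD p = (fun i : Fin (n + 1) => k p (pts i)) ⬝ᵥ Δ⁻¹ *ᵥ y)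
    (hμDt : ∀ p, μDt p =
      (fun j : Fin n => k p (pts j.succ)) ⬝ᵥ Δt⁻¹ *ᵥ (fun j : Fin n => y j.succ))
    (a : ℝ) (ha : a = E * y 0 + G ⬝ᵥ (fun j : Fin n => y j.succ))
    (b : Fin n → ℝ)
    (hb : b = y 0 • H + (fun j : Fin n => y j.succ) ᵥ* (F - Δt⁻¹))
    (convS : EuclideanSpace ℝ (Fin d) → ℝ)
    (hconvS : ∀ v, convS v = ∫ u : EuclideanSpace ℝ (Fin d), kS ‖u‖ * kS ‖v - u‖)
    (convT : ℝ → ℝ → ℝ)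
    (hconvT : ∀ a' s, convT a' s = ∫ τ in Set.Ioi a', kT |τ| * kT |s - τ|)
    (hintS : ∀ v : EuclideanSpace ℝ (Fin d),
      Integrable (fun u : EuclideanSpace ℝ (Fin d) => kS ‖u‖ * kS ‖v - u‖))
    (hintT : ∀ a' s : ℝ, IntegrableOn (fun τ => kT |τ| * kT |s - τ|) (Set.Ioi a'))
    (t0 : ℝ) (S : Set (EuclideanSpace ℝ (Fin d))) (hS : MeasurableSet S)
    (C : Matrix (Fin (n + 1)) (Fin (n + 1)) ℝ)
    (hC : ∀ i j, C i j =
      convS ((pts j).1 - (pts i).1) * convT (t0 - (pts i).2) ((pts j).2 - (pts i).2)) :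
    (∫ x in S, ∫ t in Set.Ioi t0, (μD (x, t) - μDt (x, t)) ^ 2)
      ≤ lam ^ 2 * a ^ 2 * C 0 0 +
        2 * lam ^ 2 * a * ∑ j : Fin n, b j * C 0 j.succ +
        lam ^ 2 * ∑ i : Fin n, ∑ j : Fin n, b i * b j * C i.succ j.succ := by
  have hltpos : (0:ℝ) < lam + sig ^ 2 := by positivity
  set β : ℝ := (lam + sig ^ 2)⁻¹ with hβ
  have hβpos : 0 < β := inv_pos.mpr hltpos
  have hβlt : β * (lam + sig ^ 2) = 1 := inv_mul_cancel₀ hltpos.ne'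
  have ksymm : ∀ p q, k p q = k q p := by
    intro p q; rw [hk, hk, norm_sub_rev, abs_sub_comm]
  have hΔsymm : ∀ i j, Δ i j = Δ j i := by
    intro i j; rw [hΔ, hΔ, ksymm]
    by_cases h : i = j <;> simp [h, eq_comm]
  have hΔ00 : Δ 0 0 = lam + sig ^ 2 := by
    rw [hΔ, hk]; simp [hkS0, hkT0]
  have hΔ0s : ∀ j : Fin n, Δ 0 j.succ = k1 j := by
    intro j; rw [hΔ, hk1]
    simp [(Fin.succ_ne_zero j).symm]
  have hΔs0 : ∀ j : Fin n, Δ j.succ 0 = k1 j := by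
    intro j; rw [hΔsymm, hΔ0s]
  have hΔss : ∀ i j : Fin n, Δ i.succ j.succ = Δt i j := by
    intro i j; rw [hΔt]; rfl
  have hΔtsymm : Δtᵀ = Δt := by
    ext i j; simp only [transpose_apply]; rw [← hΔss, ← hΔss, hΔsymm]
  -- quadratic form expansion
  have quad : ∀ (c : ℝ) (x : Fin n → ℝ),
      (Fin.cases c x : ∀ _ : Fin (n+1), ℝ) ⬝ᵥ Δ *ᵥ (Fin.cases c x) =
        c ^ 2 * (lam + sig ^ 2) + 2 * c * (k1 ⬝ᵥ x) + x ⬝ᵥ Δt *ᵥ x := by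
    intro c x
    have expand : ∀ i : Fin n, x i * (k1 i * c + ∑ j, Δt i j * x j)
        = c * (k1 i * x i) + x i * (∑ j, Δt i j * x j) := fun i => by ring
    simp only [dotProduct, mulVec, Fin.sum_univ_succ, Fin.cases_zero, Fin.cases_succ,
      hΔ00, hΔ0s, hΔs0, hΔss]
    rw [Finset.sum_congr rfl fun i _ => expand i, Finset.sum_add_distrib, ← Finset.mul_sum]
    ring
  have hposdef : ∀ u : Fin (n+1) → ℝ, u ≠ 0 → 0 < u ⬝ᵥ Δ *ᵥ u := by
    intro u hu
    have := hPD.dotProduct_mulVec_pos hu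
    simpa using this
  -- Δt is positive definite
  have hΔtPD : Δt.PosDef := by
    refine PosDef.of_dotProduct_mulVec_pos ?_ ?_
    · show Δtᴴ = Δt
      ext i j
      simp only [conjTranspose_apply, star_trivial]
      rw [← hΔss, ← hΔss, hΔsymm]
    · intro x hx
      have hx' : (Fin.cases 0 x : ∀ _ : Fin (n+1), ℝ) ≠ 0 := by
        intro hz; apply hx; funext j
        have := congrFun hz j.succ; simpa using this
      have h2 := hposdef _ hx'
      rw [quad 0 x] at h2
      simpa using h2
  have hΔtdet : IsUnit Δt.det := isUnit_iff_ne_zero.mpr hΔtPD.det_pos.ne'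
  have hΔtinv : Δt * Δt⁻¹ = 1 := mul_nonsing_inv _ hΔtdet
  have hΔtinv' : Δt⁻¹ * Δt = 1 := nonsing_inv_mul _ hΔtdet
  have hΔtcan : ∀ v : Fin n → ℝ, Δt *ᵥ (Δt⁻¹ *ᵥ v) = v := by
    intro v; rw [mulVec_mulVec, hΔtinv, one_mulVec]
  have hΔtinvsymm : Δt⁻¹ᵀ = Δt⁻¹ := by rw [transpose_nonsing_inv, hΔtsymm]
  have hvmv : ∀ x : Fin n → ℝ, (vecMulVec k1 k1) *ᵥ x = (k1 ⬝ᵥ x) • k1 := by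
    intro x; funext i
    simp only [mulVec, vecMulVec_apply, dotProduct, Pi.smul_apply, smul_eq_mul,
      Finset.mul_sum, Finset.sum_mul]
    exact Finset.sum_congr rfl fun j _ => by ring
  set Mm : Matrix (Fin n) (Fin n) ℝ := Δt - β • vecMulVec k1 k1 with hMm
  have hvsym : (vecMulVec k1 k1)ᵀ = vecMulVec k1 k1 := by
    ext i j; simp [transpose_apply, vecMulVec_apply, mul_comm]
  have hMmsymm : Mmᵀ = Mm := by
    rw [hMm, transpose_sub, transpose_smul, hΔtsymm, hvsym]
  have hMmPD : Mm.PosDef := by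
    refine PosDef.of_dotProduct_mulVec_pos ?_ ?_
    · show Mmᴴ = Mm
      ext i j
      simp only [conjTranspose_apply, star_trivial]
      exact congrFun (congrFun hMmsymm i) j
    · intro x hx
      have hqM : x ⬝ᵥ Mm *ᵥ x = x ⬝ᵥ Δt *ᵥ x - β * (k1 ⬝ᵥ x) ^ 2 := by
        rw [hMm, sub_mulVec, dotProduct_sub, smul_mulVec, hvmv]
        have e1 : x ⬝ᵥ β • ((k1 ⬝ᵥ x) • k1) = β * (k1 ⬝ᵥ x) ^ 2 := by
          rw [dotProduct_smul, dotProduct_smul, dotProduct_comm x k1]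
          simp only [smul_eq_mul]; ring
        rw [e1]
      have hx' : (Fin.cases (-(β * (k1 ⬝ᵥ x))) x : ∀ _ : Fin (n+1), ℝ) ≠ 0 := by
        intro hz; apply hx; funext j
        have := congrFun hz j.succ; simpa using this
      have h2 := hposdef _ hx'
      rw [quad _ x] at h2
      have : (-(β * (k1 ⬝ᵥ x))) ^ 2 * (lam + sig ^ 2) + 2 * (-(β * (k1 ⬝ᵥ x))) * (k1 ⬝ᵥ x)
          + x ⬝ᵥ Δt *ᵥ x = x ⬝ᵥ Δt *ᵥ x - β * (k1 ⬝ᵥ x) ^ 2 := by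
        have : β ^ 2 * (lam + sig ^ 2) = β := by
          rw [pow_two, mul_assoc, hβlt, mul_one]
        nlinarith [this]
      rw [this] at h2
      have h3 : 0 < x ⬝ᵥ Mm *ᵥ x := by rw [hqM]; exact h2
      simpa using h3
  have hMmdet : IsUnit Mm.det := isUnit_iff_ne_zero.mpr hMmPD.det_pos.ne'
  have hFMm : F = Mm⁻¹ := by rw [hF, hMm]
  have hMmF : Mm * F = 1 := by rw [hFMm]; exact mul_nonsing_inv _ hMmdet
  have hFcan : ∀ v : Fin n → ℝ, F *ᵥ (Mm *ᵥ v) = v := by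
    intro v; rw [mulVec_mulVec, hFMm, nonsing_inv_mul _ hMmdet, one_mulVec]
  have hMmcan : ∀ v : Fin n → ℝ, Mm *ᵥ (F *ᵥ v) = v := by
    intro v; rw [mulVec_mulVec, hMmF, one_mulVec]
  have hFsymm : Fᵀ = F := by rw [hFMm, transpose_nonsing_inv, hMmsymm]
  -- the Schur complement scalar
  obtain ⟨s, hs⟩ : ∃ s : ℝ, s = lam + sig ^ 2 - k1 ⬝ᵥ Δt⁻¹ *ᵥ k1 := ⟨_, rfl⟩
  obtain ⟨w, hw⟩ : ∃ w : Fin n → ℝ, w = Δt⁻¹ *ᵥ k1 := ⟨_, rfl⟩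
  have hskw : s = lam + sig ^ 2 - k1 ⬝ᵥ w := by rw [hs, hw]
  have hspos : 0 < s := by
    have hx' : (Fin.cases 1 (-w) : ∀ _ : Fin (n+1), ℝ) ≠ 0 := by
      intro hz
      have := congrFun hz 0; simpa using this
    have h2 := hposdef _ hx'
    rw [quad 1 (-w)] at h2
    have e1 : k1 ⬝ᵥ (-w) = -(k1 ⬝ᵥ w) := by simp
    have e2 : (-w) ⬝ᵥ Δt *ᵥ (-w) = w ⬝ᵥ k1 := by
      rw [mulVec_neg, dotProduct_neg, neg_dotProduct, neg_neg, hw, hΔtcan]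
    rw [e1, e2, dotProduct_comm w k1] at h2
    have e3 : (1:ℝ)^2 * (lam + sig^2) + 2*1*(-(k1 ⬝ᵥ w)) + k1 ⬝ᵥ w
        = lam + sig^2 - k1 ⬝ᵥ w := by ring
    rw [e3, ← hskw] at h2
    exact h2
  have hEs : E = s⁻¹ := by rw [hE, hs]
  have hsE : E * s = 1 := by rw [hEs]; exact inv_mul_cancel₀ hspos.ne'
  -- key vector identity
  have hΔtw : Δt *ᵥ w = k1 := by rw [hw, hΔtcan]
  have hMw : Mm *ᵥ w = (β * s) • k1 := by
    have hβs : β * s = 1 - β * (k1 ⬝ᵥ w) := by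
      rw [hskw, mul_sub, hβlt]
    rw [hMm, sub_mulVec, smul_mulVec, hvmv, hΔtw, hβs]
    funext i
    simp only [Pi.sub_apply, Pi.smul_apply, smul_eq_mul]
    ring
  have hwF : w = (β * s) • (F *ᵥ k1) := by
    have h := hFcan w
    rw [hMw, mulVec_smul] at h
    exact h.symm
  have hEwF : E • w = β • (F *ᵥ k1) := by
    rw [hwF, smul_smul]
    congr 1
    linear_combination β * hsE
  have hkFk : β * (k1 ⬝ᵥ (F *ᵥ k1)) = E * (lam + sig ^ 2) - 1 := by
    have h1 : k1 ⬝ᵥ w = (β * s) * (k1 ⬝ᵥ (F *ᵥ k1)) := by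
      rw [hwF, dotProduct_smul, smul_eq_mul]
    have h2 : k1 ⬝ᵥ w = lam + sig ^ 2 - s := by rw [hskw]; ring
    have h3 : β * (k1 ⬝ᵥ (F *ᵥ k1)) = E * (k1 ⬝ᵥ w) := by
      rw [h1]
      linear_combination (-(β * (k1 ⬝ᵥ (F *ᵥ k1)))) * hsE
    rw [h3, h2]
    linear_combination (-1 : ℝ) * hsE
  -- data vectors
  obtain ⟨yt, hyt⟩ : ∃ yt : Fin n → ℝ, yt = fun j : Fin n => y j.succ := ⟨_, rfl⟩
  obtain ⟨wy, hwy⟩ : ∃ wy : Fin n → ℝ, wy = Δt⁻¹ *ᵥ yt := ⟨_, rfl⟩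
  have hΔtwy : Δt *ᵥ wy = yt := by rw [hwy, hΔtcan]
  have hsy : (F - Δt⁻¹)ᵀ = F - Δt⁻¹ := by rw [transpose_sub, hFsymm, hΔtinvsymm]
  have hbm : b = y 0 • H + (F - Δt⁻¹) *ᵥ yt := by
    rw [hb, ← hyt, ← hsy, vecMul_transpose, hsy]
  have hΔteq : Δt = Mm + β • vecMulVec k1 k1 := by rw [hMm, sub_add_cancel]
  have hΔtF : ∀ v : Fin n → ℝ, Δt *ᵥ (F *ᵥ v) = v + (β * (k1 ⬝ᵥ (F *ᵥ v))) • k1 := by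
    intro v
    rw [hΔteq, add_mulVec, hMmcan, smul_mulVec, hvmv, smul_smul]
  have hco : β * (1 + β * (k1 ⬝ᵥ (F *ᵥ k1))) = E := by
    linear_combination β * hkFk + E * hβlt
  have hΔtH : Δt *ᵥ H = (-E) • k1 := by
    rw [hH, mulVec_neg, mulVec_smul, hΔtF]
    funext i
    simp only [Pi.neg_apply, Pi.smul_apply, Pi.add_apply, smul_eq_mul]
    linear_combination (-(k1 i)) * hco
  have hkvm : k1 ᵥ* Δt⁻¹ = w := by
    rw [hw, ← hΔtinvsymm, vecMul_transpose, hΔtinvsymm]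
  have hFk1vm : k1 ᵥ* F = F *ᵥ k1 := by
    rw [← hFsymm, vecMul_transpose, hFsymm]
  have hsc : β * (k1 ⬝ᵥ (F *ᵥ yt)) = E * (w ⬝ᵥ yt) := by
    have h1 : k1 ⬝ᵥ (F *ᵥ yt) = (F *ᵥ k1) ⬝ᵥ yt := by
      rw [dotProduct_mulVec, hFk1vm]
    have h2 := congrArg (fun v => v ⬝ᵥ yt) hEwF
    simp only [smul_dotProduct, smul_eq_mul] at h2
    rw [h1, ← h2]
  have hGw : G = (-E) • w := by
    rw [hG, hkvm]
    funext i; simp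
  have haw : a = E * y 0 - E * (w ⬝ᵥ yt) := by
    rw [ha, ← hyt, hGw, smul_dotProduct]
    simp only [smul_eq_mul]; ring
  have hab : Δt *ᵥ b = (-a) • k1 := by
    rw [hbm, mulVec_add, mulVec_smul, hΔtH, sub_mulVec, mulVec_sub, hΔtF, hΔtcan]
    funext i
    simp only [Pi.add_apply, Pi.sub_apply, Pi.smul_apply, smul_eq_mul]
    linear_combination (k1 i) * hsc + (k1 i) * haw
  have hk1H : k1 ⬝ᵥ H = -(E * (lam + sig ^ 2) - 1) := by
    rw [hH, dotProduct_neg, dotProduct_smul, smul_eq_mul, hkFk]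
  have hk1Fyt : k1 ⬝ᵥ (F *ᵥ yt) = (lam + sig ^ 2) * (E * (w ⬝ᵥ yt)) := by
    linear_combination (lam + sig ^ 2) * hsc - (k1 ⬝ᵥ (F *ᵥ yt)) * hβlt
  have hk1wy : k1 ⬝ᵥ wy = w ⬝ᵥ yt := by
    rw [hwy, dotProduct_mulVec, hkvm]
  have hrow0 : (lam + sig ^ 2) * a + k1 ⬝ᵥ (b + wy) = y 0 := by
    rw [dotProduct_add, hbm, dotProduct_add, dotProduct_smul, smul_eq_mul, hk1H,
      sub_mulVec, dotProduct_sub, hk1Fyt, dotProduct_mulVec, hkvm, hk1wy, haw]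
    ring
  -- the coefficient vector z
  obtain ⟨z, hzdef⟩ : ∃ z : Fin (n+1) → ℝ,
      z = Fin.cases a (fun j => b j + wy j) := ⟨_, rfl⟩
  have hΔz : Δ *ᵥ z = y := by
    funext i
    refine Fin.cases ?_ ?_ i
    · show ∑ j, Δ 0 j * z j = y 0
      rw [← hrow0, Fin.sum_univ_succ]
      simp only [hzdef, Fin.cases_zero, Fin.cases_succ, hΔ00, hΔ0s]
      simp only [dotProduct, Pi.add_apply]
    · intro i
      show ∑ j, Δ i.succ j * z j = y i.succ
      rw [Fin.sum_univ_succ]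
      simp only [hzdef, Fin.cases_zero, Fin.cases_succ, hΔs0, hΔss]
      have hsplit : ∑ j, Δt i j * (b j + wy j) = (Δt *ᵥ b) i + (Δt *ᵥ wy) i := by
        simp [mulVec, dotProduct, mul_add, Finset.sum_add_distrib]
      rw [hsplit, hab, hΔtwy, hyt]
      simp only [Pi.smul_apply, smul_eq_mul]
      ring
  have hΔdet : IsUnit Δ.det := isUnit_iff_ne_zero.mpr hPD.det_pos.ne'
  have hzinv : Δ⁻¹ *ᵥ y = z := by
    rw [← hΔz, mulVec_mulVec, nonsing_inv_mul _ hΔdet, one_mulVec]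
  have hpoint : ∀ p, μD p - μDt p
      = a * k p (pts 0) + ∑ j : Fin n, b j * k p (pts j.succ) := by
    intro p
    rw [hμD p, hμDt p, hzinv,
      show (Δt⁻¹ *ᵥ fun j : Fin n => y j.succ) = wy from by rw [hwy, hyt]]
    simp only [dotProduct, hzdef]
    rw [Fin.sum_univ_succ]
    simp only [Fin.cases_zero, Fin.cases_succ]
    rw [add_sub_assoc, ← Finset.sum_sub_distrib]
    have hterm : ∀ j ∈ Finset.univ,
        k p (pts j.succ) * (b j + wy j) - k p (pts j.succ) * wy j
          = b j * k p (pts j.succ) := fun j _ => by ring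
    rw [Finset.sum_congr rfl hterm, mul_comm]
  -- Integration part
  obtain ⟨c, hcdef⟩ : ∃ c : Fin (n+1) → ℝ, c = Fin.cases a b := ⟨_, rfl⟩
  obtain ⟨φ, hφdef⟩ : ∃ φ : Fin (n+1) → EuclideanSpace ℝ (Fin d) → ℝ,
      φ = fun i x => kS ‖x - (pts i).1‖ := ⟨_, rfl⟩
  obtain ⟨ψ, hψdef⟩ : ∃ ψ : Fin (n+1) → ℝ → ℝ, ψ = fun i t => kT |t - (pts i).2| := ⟨_, rfl⟩
  have hpt2 : ∀ (p : EuclideanSpace ℝ (Fin d) × ℝ) (i : Fin (n+1)),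
      k p (pts i) = lam * (φ i p.1 * ψ i p.2) := by
    intro p i; rw [hk, hφdef, hψdef]; ring
  have hsq : ∀ p : EuclideanSpace ℝ (Fin d) × ℝ, (μD p - μDt p) ^ 2
      = ∑ i, ∑ j, (lam ^ 2 * (c i * c j)) * ((φ i p.1 * φ j p.1) * (ψ i p.2 * ψ j p.2)) := by
    intro p
    have hkey : μD p - μDt p = ∑ i, (lam * c i) * (φ i p.1 * ψ i p.2) := by
      rw [hpoint p, hcdef, Fin.sum_univ_succ]
      simp only [Fin.cases_zero, Fin.cases_succ]
      have hterm : ∀ j ∈ Finset.univ, b j * k p (pts j.succ)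
          = (lam * b j) * (φ j.succ p.1 * ψ j.succ p.2) := fun j _ => by rw [hpt2]; ring
      rw [Finset.sum_congr rfl hterm, hpt2]
      ring
    rw [hkey, pow_two, Finset.sum_mul_sum]
    exact Finset.sum_congr rfl fun i _ => Finset.sum_congr rfl fun j _ => by ring
  -- spatial integrals
  have hSrepr : ∀ i j : Fin (n+1), (fun x : EuclideanSpace ℝ (Fin d) => φ i x * φ j x)
      = fun x => (fun u => kS ‖u‖ * kS ‖((pts j).1 - (pts i).1) - u‖) (x - (pts i).1) := by
    intro i j
    funext x
    rw [hφdef]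
    simp only
    congr 2
    rw [show (pts j).1 - (pts i).1 - (x - (pts i).1) = (pts j).1 - x by abel, norm_sub_rev]
  have hL1 : ∀ i j : Fin (n+1),
      Integrable (fun x : EuclideanSpace ℝ (Fin d) => φ i x * φ j x) volume := by
    intro i j
    rw [hSrepr i j]
    exact (hintS _).comp_sub_right _
  have hL3 : ∀ i j : Fin (n+1),
      (∫ x : EuclideanSpace ℝ (Fin d), φ i x * φ j x) = convS ((pts j).1 - (pts i).1) := by
    intro i j
    rw [hSrepr i j, integral_sub_right_eq_self
      (fun u => kS ‖u‖ * kS ‖((pts j).1 - (pts i).1) - u‖) ((pts i).1), hconvS]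
  -- time integrals
  have hfe : ∀ i j : Fin (n+1), (fun t : ℝ => ψ i t * ψ j t)
      = fun t => (fun τ => kT |τ| * kT |((pts j).2 - (pts i).2) - τ|) (t - (pts i).2) := by
    intro i j
    funext t
    rw [hψdef]
    simp only
    congr 2
    rw [show (pts j).2 - (pts i).2 - (t - (pts i).2) = (pts j).2 - t by ring, abs_sub_comm]
  have hpre : ∀ r : ℝ, (fun t : ℝ => t - r) ⁻¹' (Set.Ioi (t0 - r)) = Set.Ioi t0 := by
    intro r; ext t; simp [Set.mem_Ioi, sub_lt_sub_iff_right]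
  have hL2 : ∀ i j : Fin (n+1),
      IntegrableOn (fun t => ψ i t * ψ j t) (Set.Ioi t0) := by
    intro i j
    have h := ((measurePreserving_sub_right volume (pts i).2).integrableOn_comp_preimage
      (MeasurableEquiv.subRight (pts i).2).measurableEmbedding
      (f := fun τ => kT |τ| * kT |((pts j).2 - (pts i).2) - τ|)
      (s := Set.Ioi (t0 - (pts i).2))).mpr (hintT _ _)
    rw [hpre] at h
    rw [hfe i j]
    exact h
  have hL4 : ∀ i j : Fin (n+1), (∫ t in Set.Ioi t0, ψ i t * ψ j t)
      = convT (t0 - (pts i).2) ((pts j).2 - (pts i).2) := by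
    intro i j
    rw [hconvT, hfe i j]
    rw [← (measurePreserving_sub_right volume (pts i).2).setIntegral_preimage_emb
      (MeasurableEquiv.subRight (pts i).2).measurableEmbedding
      (fun τ => kT |τ| * kT |((pts j).2 - (pts i).2) - τ|) (Set.Ioi (t0 - (pts i).2))]
    rw [hpre]
  -- the product measure
  set μp := (volume : Measure (EuclideanSpace ℝ (Fin d))).prod
    ((volume : Measure ℝ).restrict (Set.Ioi t0)) with hμp
  have hterm_int : ∀ i j : Fin (n+1),
      Integrable (fun p : EuclideanSpace ℝ (Fin d) × ℝ =>
        (φ i p.1 * φ j p.1) * (ψ i p.2 * ψ j p.2)) μp :=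
    fun i j => (hL1 i j).mul_prod (hL2 i j)
  have hterm_val : ∀ i j : Fin (n+1),
      (∫ p : EuclideanSpace ℝ (Fin d) × ℝ,
        (φ i p.1 * φ j p.1) * (ψ i p.2 * ψ j p.2) ∂μp) = C i j := by
    intro i j
    rw [hμp, integral_prod_mul (fun x => φ i x * φ j x) (fun t => ψ i t * ψ j t)]
    rw [hL3 i j, hL4 i j, hC i j]
  have hF2eq : (fun p : EuclideanSpace ℝ (Fin d) × ℝ => (μD p - μDt p) ^ 2)
      = fun p => ∑ i, ∑ j,
        (lam ^ 2 * (c i * c j)) * ((φ i p.1 * φ j p.1) * (ψ i p.2 * ψ j p.2)) :=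
    funext fun p => hsq p
  have hF2int : Integrable (fun p : EuclideanSpace ℝ (Fin d) × ℝ => (μD p - μDt p) ^ 2) μp := by
    rw [hF2eq]
    exact integrable_finset_sum _ fun i _ =>
      integrable_finset_sum _ fun j _ => (hterm_int i j).const_mul _
  have hval : (∫ p : EuclideanSpace ℝ (Fin d) × ℝ, (μD p - μDt p) ^ 2 ∂μp)
      = ∑ i, ∑ j, (lam ^ 2 * (c i * c j)) * C i j := by
    rw [hF2eq]
    rw [integral_finset_sum _ fun i _ =>
      integrable_finset_sum _ fun j _ => (hterm_int i j).const_mul _]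
    refine Finset.sum_congr rfl fun i _ => ?_
    rw [integral_finset_sum _ fun j _ => (hterm_int i j).const_mul _]
    refine Finset.sum_congr rfl fun j _ => ?_
    rw [integral_const_mul, hterm_val i j]
  have hCsymm : ∀ i j : Fin (n+1), C i j = C j i := by
    intro i j
    rw [← hterm_val i j, ← hterm_val j i]
    congr 1
    funext p
    ring
  -- chain of (in)equalities
  have hinner_nonneg : ∀ x : EuclideanSpace ℝ (Fin d),
      0 ≤ ∫ t in Set.Ioi t0, (μD (x, t) - μDt (x, t)) ^ 2 :=
    fun x => integral_nonneg fun t => sq_nonneg _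
  have houter_int : Integrable
      (fun x : EuclideanSpace ℝ (Fin d) =>
        ∫ t in Set.Ioi t0, (μD (x, t) - μDt (x, t)) ^ 2) volume :=
    hF2int.integral_prod_left
  have hstep1 : (∫ x in S, ∫ t in Set.Ioi t0, (μD (x, t) - μDt (x, t)) ^ 2)
      ≤ ∫ x : EuclideanSpace ℝ (Fin d), ∫ t in Set.Ioi t0, (μD (x, t) - μDt (x, t)) ^ 2 :=
    setIntegral_le_integral houter_int (Filter.Eventually.of_forall hinner_nonneg)
  have hstep2 : (∫ x : EuclideanSpace ℝ (Fin d), ∫ t in Set.Ioi t0, (μD (x, t) - μDt (x, t)) ^ 2)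
      = ∫ p : EuclideanSpace ℝ (Fin d) × ℝ, (μD p - μDt p) ^ 2 ∂μp :=
    integral_integral hF2int
  -- final sum rearrangement
  have hsplit2 : ∀ f : Fin (n+1) → Fin (n+1) → ℝ, (∑ i, ∑ j, f i j)
      = f 0 0 + (∑ j : Fin n, f 0 j.succ)
        + ((∑ i : Fin n, f i.succ 0) + ∑ i : Fin n, ∑ j : Fin n, f i.succ j.succ) := by
    intro f
    rw [Fin.sum_univ_succ]
    congr 1
    · rw [Fin.sum_univ_succ]
    · rw [← Finset.sum_add_distrib]
      exact Finset.sum_congr rfl fun i _ => by rw [Fin.sum_univ_succ]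
  have hexp : (∑ i, ∑ j, (lam ^ 2 * (c i * c j)) * C i j)
      = lam ^ 2 * a ^ 2 * C 0 0 +
        2 * lam ^ 2 * a * ∑ j : Fin n, b j * C 0 j.succ +
        lam ^ 2 * ∑ i : Fin n, ∑ j : Fin n, b i * b j * C i.succ j.succ := by
    rw [hsplit2]
    simp only [hcdef, Fin.cases_zero, Fin.cases_succ]
    have e1 : (∑ i : Fin n, (lam ^ 2 * (b i * a)) * C i.succ 0)
        = ∑ j : Fin n, (lam ^ 2 * (a * b j)) * C 0 j.succ :=
      Finset.sum_congr rfl fun i _ => by rw [hCsymm]; ring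
    have e2 : (∑ j : Fin n, (lam ^ 2 * (a * b j)) * C 0 j.succ)
        = lam ^ 2 * a * ∑ j : Fin n, b j * C 0 j.succ := by
      rw [Finset.mul_sum]
      exact Finset.sum_congr rfl fun j _ => by ring
    have e3 : (∑ i : Fin n, ∑ j : Fin n, (lam ^ 2 * (b i * b j)) * C i.succ j.succ)
        = lam ^ 2 * ∑ i : Fin n, ∑ j : Fin n, b i * b j * C i.succ j.succ := by
      rw [Finset.mul_sum]
      refine Finset.sum_congr rfl fun i _ => ?_
      rw [Finset.mul_sum]
      exact Finset.sum_congr rfl fun j _ => by ring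
    rw [e1, e2, e3]
    ring
  calc (∫ x in S, ∫ t in Set.Ioi t0, (μD (x, t) - μDt (x, t)) ^ 2)
      ≤ ∫ x : EuclideanSpace ℝ (Fin d), ∫ t in Set.Ioi t0, (μD (x, t) - μDt (x, t)) ^ 2 :=
        hstep1
    _ = ∫ p : EuclideanSpace ℝ (Fin d) × ℝ, (μD p - μDt p) ^ 2 ∂μp := hstep2
    _ = ∑ i, ∑ j, (lam ^ 2 * (c i * c j)) * C i j := hval
    _ = _ := hexp
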